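/- arXiv:1907.03344 — 5 statements merged into one kernel-verified Lean document; each statement's English description precedes it below -/
import Mathlib

section
/- Let D be a 2-(v,k,λ)_q subspace design on V and H a fixed hyperplane of V. Taking as points the 1-dimensional subspaces of V not contained in H, and as blocks the sets of 1-dimensional subspaces of B not contained in H for each block B not contained in H, one obtains a combinatorial 2-(q^{v-1}, q^{k-1}, λ) design. -/
open Module Submodule

lemma myCard (F M : Type*) [Field F] [Fintype F] [AddCommGroup M] [Module F M]
    [FiniteDimensional F M] : Nat.card M = Fintype.card F ^ Module.finrank F M := by
  classical
  rw [Nat.card_congr (Module.finBasis F M).equivFun.toEquiv]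
  simp [Nat.card_eq_fintype_card]

lemma aux_card {F V : Type*} [Field F] [Fintype F] [AddCommGroup V] [Module F V]
    [FiniteDimensional F V] (f : V →ₗ[F] F) (W : Submodule F V)
    (w : V) (hw : w ∈ W) (hfw : f w = 1) :
    Nat.card {P : Submodule F V //
        Module.finrank F P = 1 ∧ P ≤ W ∧ ¬ P ≤ LinearMap.ker f}
      = Fintype.card F ^ (Module.finrank F W - 1) := by
  classical
  set g := f.domRestrict W with hg
  -- bijection 1 : ker g ≃ {x : W // f x = 1}
  have e1 : (LinearMap.ker g) ≃ {x : W // f (x : V) = 1} := by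
    refine ⟨fun y => ⟨y.1 + ⟨w, hw⟩, ?_⟩, fun x => ⟨x.1 - ⟨w, hw⟩, ?_⟩, ?_, ?_⟩
    · have := y.2
      simp only [LinearMap.mem_ker, hg, LinearMap.domRestrict_apply] at this
      simp [this, hfw]
    · have := x.2
      simp [LinearMap.mem_ker, hg, LinearMap.domRestrict_apply, this, hfw]
    · intro y; ext; simp
    · intro x; ext; simp
  -- bijection 2 : {x : W // f x = 1} ≃ the subtype of lines
  have e2 : {x : W // f (x : V) = 1} ≃ {P : Submodule F V //
      Module.finrank F P = 1 ∧ P ≤ W ∧ ¬ P ≤ LinearMap.ker f} := by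
    refine Equiv.ofBijective (fun x => ⟨F ∙ (x.1 : V), ?_, ?_, ?_⟩) ⟨?_, ?_⟩
    · refine finrank_span_singleton ?_
      intro h0
      have := x.2
      rw [h0] at this; simp at this
    · rw [span_le]; simp
    · intro hle
      have : f (x.1 : V) = 0 := hle (mem_span_singleton_self _)
      rw [x.2] at this; exact one_ne_zero this
    · intro x y hxy
      simp only [Subtype.mk.injEq] at hxy
      have hmem : (y.1 : V) ∈ (F ∙ (x.1 : V)) := by
        rw [hxy]; exact mem_span_singleton_self _
      obtain ⟨c, hc⟩ := mem_span_singleton.mp hmem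
      have : f (y.1 : V) = c * f (x.1 : V) := by
        rw [← hc]; simp
      rw [x.2, y.2, mul_one] at this
      have : (y.1 : V) = (x.1 : V) := by rw [← hc, ← this, one_smul]
      ext1; ext1; exact this.symm
    · rintro ⟨P, h1, hPW, hPk⟩
      obtain ⟨p, hpP, hpk⟩ := SetLike.not_le_iff_exists.mp hPk
      have hfp : f p ≠ 0 := by simpa using hpk
      set x : V := (f p)⁻¹ • p with hx
      have hfx : f x = 1 := by
        simp [hx, inv_mul_cancel₀ hfp]
      have hxP : x ∈ P := P.smul_mem _ hpP
      refine ⟨⟨⟨x, hPW hxP⟩, hfx⟩, ?_⟩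
      have hx0 : x ≠ 0 := by intro h; rw [h] at hfx; simp at hfx
      have hle : (F ∙ x) ≤ P := by rw [span_le]; simpa using hxP
      ext1
      exact Submodule.eq_of_le_of_finrank_eq hle
        (by rw [finrank_span_singleton hx0, h1])
  rw [← Nat.card_congr (e1.trans e2), myCard F (LinearMap.ker g)]
  congr 1
  -- rank-nullity for g
  have hsurj : LinearMap.range g = ⊤ := by
    rw [LinearMap.range_eq_top]
    intro c
    exact ⟨c • ⟨w, hw⟩, by simp [hg, hfw]⟩
  have := LinearMap.finrank_range_add_finrank_ker g
  rw [hsurj, finrank_top, Module.finrank_self] at this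
  omega

open Classical in
/-- Affine version: from a 2-(v,k,λ)_q subspace design and a fixed hyperplane H,
taking as points the 1-dimensional subspaces not contained in H and as blocks,
for each block B ⊄ H, the set of 1-dimensional subspaces of B not contained in H,
one obtains a combinatorial 2-(q^(v-1), q^(k-1), λ) design. -/
theorem stmt6 {F V : Type*} [Field F] [Fintype F] [AddCommGroup V] [Module F V]
    [FiniteDimensional F V]
    (q v k lam : ℕ) (hq : Fintype.card F = q)
    (hv : Module.finrank F V = v) (hk2 : 2 ≤ k) (hkv : k ≤ v)
    (H : Submodule F V) (hH : Module.finrank F H = v - 1)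
    (B : Finset (Submodule F V))
    (hk : ∀ b ∈ B, Module.finrank F b = k)
    (hdes : ∀ T : Submodule F V, Module.finrank F T = 2 →
      (B.filter (fun b => T ≤ b)).card = lam) :
    -- number of points
    Nat.card {P : Submodule F V // Module.finrank F P = 1 ∧ ¬ P ≤ H}
      = q ^ (v - 1) ∧
    -- size of each block's point set
    (∀ b ∈ B, ¬ b ≤ H →
      Nat.card {P : Submodule F V // Module.finrank F P = 1 ∧ P ≤ b ∧ ¬ P ≤ H}
        = q ^ (k - 1)) ∧
    -- every 2-subset of points lies in exactly λ blocks
    (∀ P Q : Submodule F V, Module.finrank F P = 1 → Module.finrank F Q = 1 →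
      ¬ P ≤ H → ¬ Q ≤ H → P ≠ Q →
      (B.filter (fun b => ¬ b ≤ H ∧ P ≤ b ∧ Q ≤ b)).card = lam) := by
  have hv2 : 2 ≤ v := le_trans hk2 hkv
  -- construct a linear functional with kernel H
  have hquot : Module.finrank F (V ⧸ H) = 1 := by
    have := Submodule.finrank_quotient_add_finrank H
    rw [hv, hH] at this; omega
  obtain ⟨e⟩ : Nonempty ((V ⧸ H) ≃ₗ[F] F) :=
    FiniteDimensional.nonempty_linearEquiv_of_finrank_eq
      (by rw [hquot, Module.finrank_self])
  set f : V →ₗ[F] F := (e : (V ⧸ H) →ₗ[F] F) ∘ₗ H.mkQ with hf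
  have hker : LinearMap.ker f = H := by
    rw [hf, LinearMap.ker_comp, LinearEquiv.ker, Submodule.comap_bot, Submodule.ker_mkQ]
  -- a vector outside H, normalized so that f w = 1
  have hHne : H ≠ ⊤ := by
    intro h; rw [h, finrank_top, hv] at hH; omega
  obtain ⟨x, hx⟩ : ∃ x, x ∉ H := by
    by_contra h; push_neg at h
    exact hHne (Submodule.eq_top_iff'.mpr h)
  have hfx : f x ≠ 0 := by rw [← hker] at hx; simpa using hx
  set w : V := (f x)⁻¹ • x with hw
  have hfw : f w = 1 := by simp [hw, inv_mul_cancel₀ hfx]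
  rw [← hker]
  refine ⟨?_, ?_, ?_⟩
  · -- number of points
    have := aux_card f ⊤ w trivial hfw
    rw [finrank_top, hv] at this
    rw [← hq, ← this]
    exact Nat.card_congr (Equiv.subtypeEquivRight (by simp))
  · -- block sizes
    intro b hb hbH
    obtain ⟨p, hpb, hpk⟩ := SetLike.not_le_iff_exists.mp hbH
    have hfp : f p ≠ 0 := by simpa using hpk
    have hfw' : f ((f p)⁻¹ • p) = 1 := by simp [inv_mul_cancel₀ hfp]
    have := aux_card f b ((f p)⁻¹ • p) (b.smul_mem _ hpb) hfw'
    rw [hk b hb, hq] at this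
    exact this
  · -- design property
    intro P Q hP hQ hPH hQH hPQ
    have hPQint : P ⊓ Q = ⊥ := by
      by_contra hne
      have h1 : 1 ≤ Module.finrank F (P ⊓ Q : Submodule F V) :=
        Submodule.one_le_finrank_iff.mpr hne
      have hle1 : Module.finrank F (P ⊓ Q : Submodule F V) ≤ 1 := by
        rw [← hP]; exact Submodule.finrank_mono inf_le_left
      have heq : Module.finrank F (P ⊓ Q : Submodule F V) = 1 := le_antisymm hle1 h1
      have h2 : P ⊓ Q = P :=
        Submodule.eq_of_le_of_finrank_eq inf_le_left (by rw [heq, hP])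
      have h3 : P ⊓ Q = Q :=
        Submodule.eq_of_le_of_finrank_eq inf_le_right (by rw [heq, hQ])
      exact hPQ (h2.symm.trans h3)
    have hT : Module.finrank F (P ⊔ Q : Submodule F V) = 2 := by
      have := Submodule.finrank_sup_add_finrank_inf_eq P Q
      rw [hP, hQ, hPQint, finrank_bot] at this
      omega
    rw [← hdes (P ⊔ Q) hT]
    congr 1
    apply Finset.filter_congr
    intro b _
    simp only [sup_le_iff, eq_iff_iff]
    constructor
    · rintro ⟨-, h1, h2⟩; exact ⟨h1, h2⟩
    · rintro ⟨h1, h2⟩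
      exact ⟨fun hbH => hPH (le_trans h1 hbH), h1, h2⟩
end

section
/- Let D be a 2-(v,k,λ)_2 subspace design on V = F_2^v. Taking as points the 2^v vectors of V, and as blocks all affine cosets (flats) x + B for blocks B of D and vectors x in V, one obtains a combinatorial 3-(2^v, 2^k, λ) design: every 3-element subset of V is contained in exactly λ such flats. -/
section Aux

variable {V : Type*} [AddCommGroup V] [Module (ZMod 2) V]

lemma aux_add_self (x : V) : x + x = 0 := by
  have h : (1 + 1 : ZMod 2) = 0 := by decide
  calc x + x = (1 : ZMod 2) • x + (1 : ZMod 2) • x := by rw [one_smul]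
    _ = ((1 + 1 : ZMod 2)) • x := (add_smul _ _ _).symm
    _ = (0 : ZMod 2) • x := by rw [h]
    _ = 0 := zero_smul _ _

lemma aux_add_add (a x : V) : a + (a + x) = x := by
  rw [← add_assoc, aux_add_self, zero_add]

lemma aux_li (u w : V) (hu : u ≠ 0) (hw : w ≠ 0)
    (huw : u ≠ w) : LinearIndependent (ZMod 2) ![u, w] := by
  rw [LinearIndependent.pair_iff]
  intro s t hst
  rcases (by decide : ∀ z : ZMod 2, z = 0 ∨ z = 1) s with rfl | rfl <;>
    rcases (by decide : ∀ z : ZMod 2, z = 0 ∨ z = 1) t with rfl | rfl <;> simp_all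
  exact huw (by
    have : u = u + (w + w) := by rw [aux_add_self, add_zero]
    rw [← add_assoc, hst, zero_add] at this; exact this)

lemma aux_finrank_span (u w : V) (hu : u ≠ 0) (hw : w ≠ 0) (huw : u ≠ w) :
    Module.finrank (ZMod 2) (Submodule.span (ZMod 2) {u, w}) = 2 := by
  have h2 := finrank_span_eq_card (aux_li u w hu hw huw)
  have hr : Set.range ![u, w] = {u, w} := by
    ext y; simp [Fin.exists_fin_two, or_comm]
  rw [hr] at h2
  rw [h2]; simp

end Aux

open Classical in
/-- From a 2-(v,k,λ)_2 subspace design, taking as points the 2^v vectors of V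
and as blocks all affine flats x + B for blocks B and x ∈ V, one obtains a
combinatorial 3-(2^v, 2^k, λ) design: every 3-element subset of V lies in
exactly λ such flats. -/
theorem stmt7 {V : Type*} [AddCommGroup V] [Module (ZMod 2) V]
    [FiniteDimensional (ZMod 2) V]
    (v k lam : ℕ) (hv : Module.finrank (ZMod 2) V = v) (hk2 : 2 ≤ k) (hkv : k ≤ v)
    (B : Finset (Submodule (ZMod 2) V))
    (hk : ∀ b ∈ B, Module.finrank (ZMod 2) b = k)
    (hdes : ∀ T : Submodule (ZMod 2) V, Module.finrank (ZMod 2) T = 2 →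
      (B.filter (fun b => T ≤ b)).card = lam) :
    -- number of points
    Nat.card V = 2 ^ v ∧
    -- each flat has 2^k points
    (∀ b ∈ B, ∀ x : V, ((fun u => x + u) '' (b : Set V)).ncard = 2 ^ k) ∧
    -- every 3-element subset lies in exactly λ flats
    (∀ a b c : V, a ≠ b → a ≠ c → b ≠ c →
      Set.ncard {Fl : Set V |
          (∃ bl ∈ B, ∃ x : V, Fl = (fun u => x + u) '' (bl : Set V)) ∧
          ({a, b, c} : Set V) ⊆ Fl} = lam) := by
  have hfin : Finite V := Module.finite_of_finite (ZMod 2)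
  have := Fintype.ofFinite V
  refine ⟨?_, ?_, ?_⟩
  · rw [Nat.card_eq_fintype_card, Module.card_eq_pow_finrank (K := ZMod 2), ZMod.card, hv]
  · intro b hb x
    rw [Set.ncard_image_of_injective _ (add_right_injective x),
      ← Nat.card_coe_set_eq, SetLike.coe_sort_coe, Nat.card_eq_fintype_card,
      Module.card_eq_pow_finrank (K := ZMod 2), ZMod.card, hk b hb]
  · intro a b c hab hac hbc
    set u : V := a + b with hu_def
    set w : V := a + c with hw_def
    have hu : u ≠ 0 := fun h => hab (by
      have := aux_add_add a b; rw [← hu_def, h, add_zero] at this; exact this)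
    have hw : w ≠ 0 := fun h => hac (by
      have := aux_add_add a c; rw [← hw_def, h, add_zero] at this; exact this)
    have huw : u ≠ w := fun h => hbc (by
      have hb' := aux_add_add a b
      have hc' := aux_add_add a c
      rw [← hu_def] at hb'; rw [← hw_def] at hc'
      rw [← hb', ← hc', h])
    set T : Submodule (ZMod 2) V := Submodule.span (ZMod 2) {u, w} with hT
    have hTr : Module.finrank (ZMod 2) T = 2 := aux_finrank_span u w hu hw huw
    have hset : {Fl : Set V |
          (∃ bl ∈ B, ∃ x : V, Fl = (fun y => x + y) '' (bl : Set V)) ∧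
          ({a, b, c} : Set V) ⊆ Fl}
        = (fun bl : Submodule (ZMod 2) V => (fun y => a + y) '' (bl : Set V)) ''
          ((B.filter (fun b => T ≤ b)) : Set (Submodule (ZMod 2) V)) := by
      ext Fl
      constructor
      · rintro ⟨⟨bl, hbl, x, rfl⟩, hsub⟩
        have ha : a ∈ (fun y => x + y) '' (bl : Set V) := hsub (by simp)
        obtain ⟨p, hp, hap⟩ := ha
        have hbmem : b ∈ (fun y => x + y) '' (bl : Set V) := hsub (by simp)
        have hcmem : c ∈ (fun y => x + y) '' (bl : Set V) := hsub (by simp)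
        obtain ⟨q, hq, hbq⟩ := hbmem
        obtain ⟨r, hr, hcr⟩ := hcmem
        have humem : u ∈ bl := by
          have : u = p + q := by
            rw [hu_def, ← hap, ← hbq]
            have h1 : (x + p) + (x + q) = (x + x) + (p + q) := by abel
            rw [h1, aux_add_self, zero_add]
          rw [this]; exact bl.add_mem hp hq
        have hwmem : w ∈ bl := by
          have : w = p + r := by
            rw [hw_def, ← hap, ← hcr]
            have h1 : (x + p) + (x + r) = (x + x) + (p + r) := by abel
            rw [h1, aux_add_self, zero_add]
          rw [this]; exact bl.add_mem hp hr
        refine ⟨bl, ?_, ?_⟩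
        · simp only [Finset.coe_filter, Set.mem_setOf_eq]
          exact ⟨hbl, by rw [hT]; exact Submodule.span_le.2 (by
            rintro z (rfl | rfl) <;> assumption)⟩
        · -- (a + ·) '' bl = (x + ·) '' bl
          ext z
          constructor
          · rintro ⟨s, hs, rfl⟩
            exact ⟨p + s, bl.add_mem hp hs, by
              simp only
              rw [← hap]; simp only; abel⟩
          · rintro ⟨s, hs, rfl⟩
            refine ⟨p + s, bl.add_mem hp hs, ?_⟩
            simp only
            rw [← hap] at *
            have : (x + p) + (p + s) = x + ((p + p) + s) := by abel
            rw [this, aux_add_self, zero_add]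
      · rintro ⟨bl, hbl, rfl⟩
        simp only [Finset.coe_filter, Set.mem_setOf_eq] at hbl
        obtain ⟨hblB, hTbl⟩ := hbl
        refine ⟨⟨bl, hblB, a, rfl⟩, ?_⟩
        have humem : u ∈ bl := hTbl (Submodule.subset_span (by simp))
        have hwmem : w ∈ bl := hTbl (Submodule.subset_span (by simp))
        rintro z (rfl | rfl | rfl)
        · exact ⟨0, bl.zero_mem, by simp⟩
        · exact ⟨u, humem, by simp only; rw [hu_def, aux_add_add]⟩
        · exact ⟨w, hwmem, by simp only; rw [hw_def, aux_add_add]⟩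
    rw [hset, Set.ncard_image_of_injOn, Set.ncard_coe_finset, hdes T hTr]
    · have key : ∀ s1 s2 : Set V,
          (fun y => a + y) '' s1 = (fun y => a + y) '' s2 → s1 ⊆ s2 := by
        intro s1 s2 h z hz
        have hz2 : a + z ∈ (fun y => a + y) '' s2 := h ▸ ⟨z, hz, rfl⟩
        obtain ⟨s, hs, hsz⟩ := hz2
        have : s = z := add_left_cancel hsz
        exact this ▸ hs
      intro b1 _ b2 _ h
      exact SetLike.coe_injective (le_antisymm (key _ _ h) (key _ _ h.symm))
end

section
/- Let N be the b×v incidence matrix of a combinatorial 2-(v,k,λ) design with replication number r, and p a prime. If p does not divide r(r−λ), then N has rank v over F_p. -/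
open Finset

/-- Hamada: if p does not divide r(r−λ), the incidence matrix of a
2-(v,k,λ) design with replication number r has full rank v over F_p. -/
theorem stmt9 {α : Type*} [Fintype α] [DecidableEq α]
    (v k lam r p : ℕ) (hp : p.Prime)
    (hv : Fintype.card α = v) (hk2 : 2 ≤ k) (hkv : k ≤ v)
    (B : Finset (Finset α))
    (hk : ∀ s ∈ B, s.card = k)
    (hdes : ∀ x y : α, x ≠ y →
      (B.filter (fun s => x ∈ s ∧ y ∈ s)).card = lam)
    (hrep : ∀ x : α, (B.filter (fun s => x ∈ s)).card = r)
    (N : Matrix {s // s ∈ B} α (ZMod p))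
    (hN : ∀ s x, N s x = if x ∈ s.1 then 1 else 0)
    (hndvd : ¬ ((p : ℤ) ∣ (r : ℤ) * ((r : ℤ) - (lam : ℤ)))) :
    N.rank = v := by
  classical
  haveI : Fact p.Prime := ⟨hp⟩
  have hpr : ¬ (p : ℤ) ∣ (r : ℤ) := fun h => hndvd (h.mul_right _)
  have hprl : ¬ (p : ℤ) ∣ ((r : ℤ) - (lam : ℤ)) := fun h => hndvd (h.mul_left _)
  have hr0 : (r : ZMod p) ≠ 0 := by
    intro h
    apply hpr
    rw [← ZMod.intCast_zmod_eq_zero_iff_dvd]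
    push_cast
    exact h
  have hrl0 : ((r : ZMod p) - (lam : ZMod p)) ≠ 0 := by
    intro h
    apply hprl
    rw [← ZMod.intCast_zmod_eq_zero_iff_dvd]
    push_cast
    exact h
  -- column sums of N are r
  have hcol : ∀ x : α, (∑ s : {s // s ∈ B}, N s x) = (r : ZMod p) := by
    intro x
    have : (∑ s : {s // s ∈ B}, N s x)
        = ∑ s ∈ B, (if x ∈ s then (1 : ZMod p) else 0) := by
      rw [← Finset.sum_coe_sort B (fun s => if x ∈ s then (1 : ZMod p) else 0)]
      exact Finset.sum_congr rfl fun s _ => hN s x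
    rw [this, Finset.sum_boole, hrep x]
  -- inner products of columns
  have hinner : ∀ x y : α, (∑ s : {s // s ∈ B}, N s x * N s y)
      = (((B.filter (fun s => x ∈ s ∧ y ∈ s)).card : ZMod p)) := by
    intro x y
    have : (∑ s : {s // s ∈ B}, N s x * N s y)
        = ∑ s ∈ B, (if x ∈ s ∧ y ∈ s then (1 : ZMod p) else 0) := by
      rw [← Finset.sum_coe_sort B (fun s => if x ∈ s ∧ y ∈ s then (1 : ZMod p) else 0)]
      refine Finset.sum_congr rfl fun s _ => ?_
      rw [hN, hN, ite_and]
      by_cases hx : x ∈ s.1 <;> by_cases hy : y ∈ s.1 <;> simp [hx, hy]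
    rw [this, Finset.sum_boole]
  -- kernel of mulVec is trivial
  have hker : ∀ c : α → ZMod p, N.mulVec c = 0 → c = 0 := by
    intro c hc
    set S := ∑ y : α, c y with hS
    have hsum : ∀ s : {s // s ∈ B}, (∑ y : α, N s y * c y) = 0 := by
      intro s
      have := congrFun hc s
      simpa [Matrix.mulVec, dotProduct] using this
    -- total sum: r * S = 0
    have hrS : (r : ZMod p) * S = 0 := by
      have h1 : (∑ s : {s // s ∈ B}, ∑ y : α, N s y * c y) = 0 := by
        simp [hsum]
      rw [Finset.sum_comm] at h1
      have h2 : (∑ y : α, (∑ s : {s // s ∈ B}, N s y) * c y) = 0 := by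
        rw [← h1]
        exact Finset.sum_congr rfl fun y _ => by rw [Finset.sum_mul]
      calc (r : ZMod p) * S = ∑ y : α, (r : ZMod p) * c y := by
            rw [hS, Finset.mul_sum]
        _ = ∑ y : α, (∑ s : {s // s ∈ B}, N s y) * c y :=
            Finset.sum_congr rfl fun y _ => by rw [hcol]
        _ = 0 := h2
    have hSz : S = 0 := by
      rcases mul_eq_zero.1 hrS with h | h
      · exact absurd h hr0
      · exact h
    -- for each x : (r - lam) * c x = 0
    funext x
    have hx : (∑ s : {s // s ∈ B}, N s x * (∑ y : α, N s y * c y)) = 0 := by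
      simp [hsum]
    have hx2 : (∑ y : α, (∑ s : {s // s ∈ B}, N s x * N s y) * c y) = 0 := by
      calc (∑ y : α, (∑ s : {s // s ∈ B}, N s x * N s y) * c y)
          = ∑ y : α, ∑ s : {s // s ∈ B}, (N s x * N s y) * c y :=
            Finset.sum_congr rfl fun y _ => Finset.sum_mul _ _ _
        _ = ∑ s : {s // s ∈ B}, ∑ y : α, (N s x * N s y) * c y := Finset.sum_comm
        _ = ∑ s : {s // s ∈ B}, N s x * (∑ y : α, N s y * c y) := by
            refine Finset.sum_congr rfl fun s _ => ?_
            rw [Finset.mul_sum]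
            exact Finset.sum_congr rfl fun y _ => by ring
        _ = 0 := hx
    have hsplit : (∑ y : α, (∑ s : {s // s ∈ B}, N s x * N s y) * c y)
        = (r : ZMod p) * c x + (lam : ZMod p) * (S - c x) := by
      rw [← Finset.sum_erase_add _ _ (Finset.mem_univ x)]
      have hxx : (∑ s : {s // s ∈ B}, N s x * N s x) = (r : ZMod p) := by
        rw [hinner]
        have : B.filter (fun s => x ∈ s ∧ x ∈ s) = B.filter (fun s => x ∈ s) :=
          Finset.filter_congr fun s _ => by simp
        rw [this, hrep x]
      have hrest : (∑ y ∈ Finset.univ.erase x,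
          (∑ s : {s // s ∈ B}, N s x * N s y) * c y)
          = (lam : ZMod p) * (S - c x) := by
        have : (∑ y ∈ Finset.univ.erase x,
            (∑ s : {s // s ∈ B}, N s x * N s y) * c y)
            = ∑ y ∈ Finset.univ.erase x, (lam : ZMod p) * c y := by
          refine Finset.sum_congr rfl fun y hy => ?_
          rw [hinner, hdes x y (Ne.symm (Finset.ne_of_mem_erase hy))]
        rw [this, ← Finset.mul_sum]
        congr 1
        rw [hS, ← Finset.sum_erase_add _ _ (Finset.mem_univ x)]
        ring
      rw [hxx, hrest]
      ring
    rw [hsplit, hSz] at hx2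
    have : ((r : ZMod p) - (lam : ZMod p)) * c x = 0 := by
      rw [← hx2]; ring
    rcases mul_eq_zero.1 this with h | h
    · exact absurd h hrl0
    · exact h
  -- conclude rank
  have hinj : Function.Injective N.mulVecLin := by
    rw [← LinearMap.ker_eq_bot]
    rw [LinearMap.ker_eq_bot']
    intro c hc
    exact hker c (by simpa [Matrix.mulVecLin_apply] using hc)
  rw [Matrix.rank, LinearMap.finrank_range_of_inj hinj,
    Module.finrank_fintype_fun_eq_card, hv]
end

section
/- Let N be the incidence matrix of a combinatorial 2-(v,k,λ) design with replication number r, and p a prime. If the rank of N over F_p is strictly less than v−1, then p divides r−λ. -/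
open Finset Matrix

/-- Hamada: if the F_p-rank of the incidence matrix of a 2-(v,k,λ) design
with replication number r is less than v−1, then p divides r−λ. -/
theorem stmt10 {α : Type*} [Fintype α] [DecidableEq α]
    (v k lam r p : ℕ) (hp : p.Prime)
    (hv : Fintype.card α = v) (hk2 : 2 ≤ k) (hkv : k ≤ v)
    (B : Finset (Finset α))
    (hk : ∀ s ∈ B, s.card = k)
    (hdes : ∀ x y : α, x ≠ y →
      (B.filter (fun s => x ∈ s ∧ y ∈ s)).card = lam)
    (hrep : ∀ x : α, (B.filter (fun s => x ∈ s)).card = r)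
    (N : Matrix {s // s ∈ B} α (ZMod p))
    (hN : ∀ s x, N s x = if x ∈ s.1 then 1 else 0)
    (hrank : N.rank < v - 1) :
    (p : ℤ) ∣ (r : ℤ) - (lam : ℤ) := by
  haveI := Fact.mk hp
  by_contra hdvd
  have ha : ((r : ZMod p) - (lam : ZMod p)) ≠ 0 := by
    intro h
    apply hdvd
    apply (ZMod.intCast_zmod_eq_zero_iff_dvd _ _).mp
    push_cast
    exact h
  set a : ZMod p := (r : ZMod p) - (lam : ZMod p) with ha_def
  -- entries of Nᵀ * N
  have hM : ∀ i j, (Nᵀ * N) i j = if i = j then (r : ZMod p) else (lam : ZMod p) := by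
    intro i j
    simp only [Matrix.mul_apply, Matrix.transpose_apply, hN]
    have h1 : ∀ s : {s // s ∈ B},
        (if i ∈ s.1 then (1:ZMod p) else 0) * (if j ∈ s.1 then 1 else 0)
          = if i ∈ s.1 ∧ j ∈ s.1 then 1 else 0 := by
      intro s; by_cases h1 : i ∈ s.1 <;> by_cases h2 : j ∈ s.1 <;> simp [h1, h2]
    rw [Finset.sum_congr rfl (fun s _ => h1 s)]
    have h2 : (∑ s : {s // s ∈ B}, if i ∈ s.1 ∧ j ∈ s.1 then (1:ZMod p) else 0)
        = ∑ s ∈ B, if i ∈ s ∧ j ∈ s then (1:ZMod p) else 0 :=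
      Finset.sum_coe_sort B (fun s => if i ∈ s ∧ j ∈ s then (1:ZMod p) else 0)
    rw [h2, Finset.sum_boole]
    by_cases hij : i = j
    · subst hij
      simp only [and_self, if_pos rfl]
      rw [hrep i]
      simp
    · rw [if_neg hij, hdes i j hij]
  -- kernel of Nᵀ * N is at most 1-dimensional
  set w : α → ZMod p := fun _ => 1 with hw
  have hker : LinearMap.ker (Nᵀ * N).mulVecLin ≤ Submodule.span (ZMod p) {w} := by
    intro x hx
    have hx' : (Nᵀ * N).mulVec x = 0 := hx
    have key : ∀ i, a * x i + (lam : ZMod p) * (∑ j, x j) = 0 := by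
      intro i
      have h0 := congrFun hx' i
      rw [Matrix.mulVec, dotProduct] at h0
      have h1 : ∀ j, (Nᵀ * N) i j * x j
          = (if i = j then a else 0) * x j + (lam : ZMod p) * x j := by
        intro j
        rw [hM]
        by_cases hij : i = j
        · simp [hij, ha_def]; ring
        · simp [hij]
      rw [Finset.sum_congr rfl (fun j _ => h1 j), Finset.sum_add_distrib] at h0
      simp only [ite_mul, zero_mul, Finset.sum_ite_eq, Finset.mem_univ, if_true] at h0
      rw [← Finset.mul_sum] at h0
      exact h0
    refine Submodule.mem_span_singleton.mpr ⟨a⁻¹ * (-(↑lam * ∑ j, x j)), funext fun i => ?_⟩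
    have h2 := key i
    have h3 : a * x i = -(↑lam * ∑ j, x j) := by linear_combination h2
    have : x i = a⁻¹ * (-(↑lam * ∑ j, x j)) := by
      field_simp [ha] at h3 ⊢
      linear_combination h3
    simp [hw, this]
  have hfin : Module.finrank (ZMod p) (LinearMap.ker (Nᵀ * N).mulVecLin) ≤ 1 := by
    calc Module.finrank (ZMod p) (LinearMap.ker (Nᵀ * N).mulVecLin)
        ≤ Module.finrank (ZMod p) (Submodule.span (ZMod p) {w}) :=
          Submodule.finrank_mono hker
      _ ≤ 1 := by
          have := finrank_span_le_card (R := ZMod p) ({w} : Set (α → ZMod p))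
          simpa using this
  have hrn : (Nᵀ * N).rank
      + Module.finrank (ZMod p) (LinearMap.ker (Nᵀ * N).mulVecLin)
      = Fintype.card α := by
    rw [Matrix.rank]
    rw [LinearMap.finrank_range_add_finrank_ker]
    simp [Module.finrank_pi]
  have hv2 : 2 ≤ v := le_trans hk2 hkv
  have hge : v - 1 ≤ (Nᵀ * N).rank := by omega
  have hle : (Nᵀ * N).rank ≤ N.rank := Matrix.rank_mul_le_right _ _
  omega
end

section
/- Let N be the incidence matrix of a combinatorial 2-(v,k,λ) design with replication number r, and p a prime. If p divides r but does not divide r−λ, then the rank of N over F_p is at least v−1. -/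
open Finset Matrix

/-- Hamada: if p divides r but p does not divide r−λ, then the F_p-rank of
the incidence matrix of a 2-(v,k,λ) design with replication number r is
at least v−1. -/
theorem stmt11 {α : Type*} [Fintype α] [DecidableEq α]
    (v k lam r p : ℕ) (hp : p.Prime)
    (hv : Fintype.card α = v) (hk2 : 2 ≤ k) (hkv : k ≤ v)
    (B : Finset (Finset α))
    (hk : ∀ s ∈ B, s.card = k)
    (hdes : ∀ x y : α, x ≠ y →
      (B.filter (fun s => x ∈ s ∧ y ∈ s)).card = lam)
    (hrep : ∀ x : α, (B.filter (fun s => x ∈ s)).card = r)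
    (N : Matrix {s // s ∈ B} α (ZMod p))
    (hN : ∀ s x, N s x = if x ∈ s.1 then 1 else 0)
    (hdvd : p ∣ r) (hndvd : ¬ ((p : ℤ) ∣ (r : ℤ) - (lam : ℤ))) :
    v - 1 ≤ N.rank := by
  haveI : Fact p.Prime := ⟨hp⟩
  have hr0 : (r : ZMod p) = 0 := (ZMod.natCast_eq_zero_iff r p).mpr hdvd
  have hlam : (lam : ZMod p) ≠ 0 := by
    intro h
    apply hndvd
    have h1 : (p : ℤ) ∣ (lam : ℤ) := by
      exact_mod_cast (ZMod.natCast_eq_zero_iff lam p).mp h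
    have h2 : (p : ℤ) ∣ (r : ℤ) := Int.natCast_dvd_natCast.mpr hdvd
    exact dvd_sub h2 h1
  set M := Nᵀ * N with hMdef
  have hM : ∀ x y : α, M x y = if x = y then (r : ZMod p) else (lam : ZMod p) := by
    intro x y
    have key : M x y = ((B.filter (fun s => x ∈ s ∧ y ∈ s)).card : ZMod p) := by
      rw [hMdef, Matrix.mul_apply]
      rw [show (∑ s : {s // s ∈ B}, Nᵀ x s * N s y)
          = ∑ s : {s // s ∈ B}, (if x ∈ s.1 ∧ y ∈ s.1 then (1 : ZMod p) else 0) by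
        refine Finset.sum_congr rfl fun s _ => ?_
        simp only [Matrix.transpose_apply, hN]
        by_cases h1 : x ∈ s.1 <;> by_cases h2 : y ∈ s.1 <;> simp [h1, h2]]
      rw [Finset.sum_coe_sort B (fun s => if x ∈ s ∧ y ∈ s then (1 : ZMod p) else 0)]
      rw [Finset.sum_boole]
    by_cases hxy : x = y
    · subst hxy
      simp only [if_pos rfl]
      rw [key]
      congr 1
      rw [show (B.filter (fun s => x ∈ s ∧ x ∈ s)) = B.filter (fun s => x ∈ s) by
        apply Finset.filter_congr; intro s _; simp]
      exact hrep x
    · rw [key, hdes x y hxy, if_neg hxy]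
  -- kernel of M is contained in span of the all-ones vector
  have hone : (1 : α → ZMod p) ≠ 0 := by
    have : Nonempty α := by
      rw [← Fintype.card_pos_iff, hv]; omega
    obtain ⟨a⟩ := this
    intro h
    have := congrFun h a
    simp at this
  have hker : LinearMap.ker M.mulVecLin ≤ Submodule.span (ZMod p) {(1 : α → ZMod p)} := by
    intro x hx
    rw [LinearMap.mem_ker] at hx
    have hx' : ∀ y : α, (lam : ZMod p) * (∑ z, x z) - (lam : ZMod p) * x y = 0 := by
      intro y
      have hxy := congrFun hx y
      rw [Matrix.mulVecLin_apply, Matrix.mulVec, dotProduct] at hxy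
      calc (lam : ZMod p) * (∑ z, x z) - (lam : ZMod p) * x y
          = ∑ z, ((lam : ZMod p) * x z - if y = z then (lam : ZMod p) * x z else 0) := by
            rw [Finset.sum_sub_distrib, ← Finset.mul_sum, Finset.sum_ite_eq]
            simp
        _ = ∑ z, M y z * x z := by
            refine Finset.sum_congr rfl fun z _ => ?_
            rw [hM y z]
            by_cases h : y = z
            · simp [h, hr0]
            · simp [h]
        _ = 0 := hxy
    have hconst : ∀ y : α, x y = ∑ z, x z := by
      intro y
      have h2 : (lam : ZMod p) * ((∑ z, x z) - x y) = 0 := by rw [mul_sub]; exact hx' y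
      rcases mul_eq_zero.mp h2 with h | h
      · exact absurd h hlam
      · exact (sub_eq_zero.mp h).symm
    rw [show x = (∑ z, x z) • (1 : α → ZMod p) by
      funext y; simp [hconst y]]
    exact Submodule.smul_mem _ _ (Submodule.mem_span_singleton_self _)
  have hrankM : v - 1 ≤ M.rank := by
    have hrn := LinearMap.finrank_range_add_finrank_ker M.mulVecLin
    have hdim : Module.finrank (ZMod p) (α → ZMod p) = v := by
      rw [Module.finrank_pi, hv]
    have hkerle : Module.finrank (ZMod p) (LinearMap.ker M.mulVecLin) ≤ 1 := by
      calc Module.finrank (ZMod p) (LinearMap.ker M.mulVecLin)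
          ≤ Module.finrank (ZMod p) (Submodule.span (ZMod p) {(1 : α → ZMod p)}) :=
            Submodule.finrank_mono hker
        _ = 1 := finrank_span_singleton hone
    have : M.rank = Module.finrank (ZMod p) (LinearMap.range M.mulVecLin) := rfl
    omega
  calc v - 1 ≤ M.rank := hrankM
    _ ≤ N.rank := Matrix.rank_mul_le_right _ _
end
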